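/- arXiv:math/0312210 — 2 statements merged into one kernel-verified Lean document; each statement's English description precedes it below -/
import Mathlib

section
/- Let u_1,...,u_k and v_1,...,v_k be two families of nonnegative functions on Ω, each family having pairwise disjoint supports. For λ ∈ [0,1] define û_i = u_i - Σ_{h≠i} u_h, v̂_i = v_i - Σ_{h≠i} v_h, and w_i = (λû_i + (1-λ)v̂_i)^+. Then the functions w_1,...,w_k have pairwise disjoint supports: w_i(x)·w_j(x) = 0 for i≠j at every point x. -/
open Finset

theorem stmt_1 {N k : ℕ} (Ω : Set (EuclideanSpace ℝ (Fin N)))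
    (u v : Fin k → EuclideanSpace ℝ (Fin N) → ℝ) (lam : ℝ) (hlam : lam ∈ Set.Icc (0:ℝ) 1)
    (hu : ∀ i x, x ∈ Ω → 0 ≤ u i x) (hv : ∀ i x, x ∈ Ω → 0 ≤ v i x)
    (hud : ∀ i j x, i ≠ j → x ∈ Ω → u i x * u j x = 0)
    (hvd : ∀ i j x, i ≠ j → x ∈ Ω → v i x * v j x = 0) :
    ∀ i j x, i ≠ j → x ∈ Ω →
      max (lam * (u i x - ∑ h ∈ univ.erase i, u h x)
            + (1 - lam) * (v i x - ∑ h ∈ univ.erase i, v h x)) 0 *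
      max (lam * (u j x - ∑ h ∈ univ.erase j, u h x)
            + (1 - lam) * (v j x - ∑ h ∈ univ.erase j, v h x)) 0 = 0 := by
  intro i j x hij hx
  obtain ⟨h0, h1⟩ := hlam
  have hei : ∀ m : Fin k, ∑ h ∈ univ.erase m, u h x = (∑ h, u h x) - u m x := fun m =>
    Finset.sum_erase_eq_sub (mem_univ m)
  have hfi : ∀ m : Fin k, ∑ h ∈ univ.erase m, v h x = (∑ h, v h x) - v m x := fun m =>
    Finset.sum_erase_eq_sub (mem_univ m)
  have hSu : u i x + u j x ≤ ∑ h, u h x := by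
    have := Finset.sum_le_sum_of_subset_of_nonneg (subset_univ ({i, j} : Finset (Fin k)))
      (fun h _ _ => hu h x hx)
    rwa [Finset.sum_pair hij] at this
  have hSv : v i x + v j x ≤ ∑ h, v h x := by
    have := Finset.sum_le_sum_of_subset_of_nonneg (subset_univ ({i, j} : Finset (Fin k)))
      (fun h _ _ => hv h x hx)
    rwa [Finset.sum_pair hij] at this
  set ai := lam * (u i x - ∑ h ∈ univ.erase i, u h x)
      + (1 - lam) * (v i x - ∑ h ∈ univ.erase i, v h x) with hai
  set aj := lam * (u j x - ∑ h ∈ univ.erase j, u h x)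
      + (1 - lam) * (v j x - ∑ h ∈ univ.erase j, v h x) with haj
  have hsum : ai + aj ≤ 0 := by
    rw [hai, haj, hei i, hei j, hfi i, hfi j]
    nlinarith [hSu, hSv]
  rcases le_or_gt ai 0 with h | h
  · rw [max_eq_right h, zero_mul]
  · have : aj ≤ 0 := by linarith
    rw [max_eq_right this, mul_zero]
end

section
/- Let F : ℝ → ℝ be concave on [0,∞) with F(0) = 0 and F ≤ 0 on [0,∞), extended to ℝ as an even function. Let a, b ≥ 0 and λ ∈ (0,1) be such that λa - (1-λ)b > 0. Then -F(λa - (1-λ)b) ≤ -λF(a) - (1-λ)F(b). -/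
theorem stmt_3 (F : ℝ → ℝ) (heven : ∀ s, F (-s) = F s)
    (hconc : ConcaveOn ℝ (Set.Ici 0) F) (h0 : F 0 = 0)
    (hneg : ∀ s, 0 ≤ s → F s ≤ 0)
    (a b lam : ℝ) (ha : 0 ≤ a) (hb : 0 ≤ b) (hlam : lam ∈ Set.Ioo (0:ℝ) 1)
    (hpos : 0 < lam * a - (1 - lam) * b) :
    -F (lam * a - (1 - lam) * b) ≤ -(lam * F a) - (1 - lam) * F b := by
  obtain ⟨hl0, hl1⟩ := hlam
  set x := lam * a - (1 - lam) * b with hx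
  have hxla : x ≤ lam * a := by nlinarith
  have hla : 0 ≤ lam * a := le_trans hpos.le hxla
  have ht : 0 < lam * a := lt_of_lt_of_le hpos hxla
  -- antitone: F (lam*a) ≤ F x
  have hanti : F (lam * a) ≤ F x := by
    have hβ : 0 ≤ x / (lam * a) := div_nonneg hpos.le hla
    have hβ1 : x / (lam * a) ≤ 1 := (div_le_one ht).mpr hxla
    have key := hconc.2 (Set.self_mem_Ici (a := (0:ℝ)))
      (Set.mem_Ici.mpr hla) (by linarith : (0:ℝ) ≤ 1 - x / (lam * a)) hβ (by ring)
    simp only [smul_eq_mul, mul_zero, zero_add, h0] at key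
    rw [div_mul_cancel₀ _ ht.ne'] at key
    nlinarith [hneg (lam * a) hla]
  -- concavity at 0 and a: lam * F a ≤ F (lam * a)
  have hc : lam * F a ≤ F (lam * a) := by
    have key := hconc.2 (Set.self_mem_Ici (a := (0:ℝ)))
      (Set.mem_Ici.mpr ha) (by linarith : (0:ℝ) ≤ 1 - lam) hl0.le (by ring)
    simp only [smul_eq_mul, mul_zero, zero_add, h0] at key
    linarith
  have hFb : (1 - lam) * F b ≤ 0 :=
    mul_nonpos_of_nonneg_of_nonpos (by linarith) (hneg b hb)
  linarith
end
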